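/- Let ρ^ss = Σ_{i=1}^d λ_i |i⟩⟨i| be a faithful density matrix on ℂ^d, invariant under the channel with Kraus operators K_0, K_1 on ℂ^d (Σ_k K_k* K_k = 1, Σ_k K_k ρ^ss K_k* = ρ^ss). For i = 1,…,d define vectors in ℂ^d ⊗ ℂ²: |v_i⟩ = Σ_{k=0}^{1} Σ_{j=1}^{d} √(λ_j/λ_i) ⟨i| K_k |j⟩ · |j⟩ ⊗ |k⟩. Then {|v_1⟩,…,|v_d⟩} is an orthonormal family. -/

import Mathlib

open Matrix

/-- If `ρˢˢ = ∑ λᵢ |i⟩⟨i|` is a faithful density matrix invariant under the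
channel with Kraus operators `K₀, K₁` on `ℂᵈ`, then the vectors
`|vᵢ⟩ = ∑_{k,j} √(λⱼ/λᵢ) ⟨i|K_k|j⟩ |j⟩⊗|k⟩` in `ℂᵈ ⊗ ℂ²` form an orthonormal family. -/
theorem stmt3 (d : ℕ) (hd : 0 < d) (lam : Fin d → ℝ)
    (hpos : ∀ i, 0 < lam i) (hsum : ∑ i, lam i = 1)
    (K : Fin 2 → Matrix (Fin d) (Fin d) ℂ)
    (hKraus : ∑ k, (K k)ᴴ * K k = 1)
    (hinv : ∑ k, K k * Matrix.diagonal (fun i => (lam i : ℂ)) * (K k)ᴴ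
        = Matrix.diagonal (fun i => (lam i : ℂ)))
    (v : Fin d → EuclideanSpace ℂ (Fin d × Fin 2))
    (hv : ∀ (i j : Fin d) (k : Fin 2),
      v i (j, k) = (Real.sqrt (lam j / lam i) : ℂ) * K k i j) :
    Orthonormal ℂ v := by
  rw [orthonormal_iff_ite]
  intro i i'
  have h1 : ∑ k, ∑ m, K k i' m * (lam m : ℂ) * star (K k i m)
      = if i' = i then (lam i' : ℂ) else 0 := by
    have h := congrFun (congrFun hinv i') i
    simp only [Matrix.sum_apply, Matrix.mul_apply, Matrix.conjTranspose_apply,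
      Matrix.diagonal_apply, mul_ite, mul_zero, ite_mul, zero_mul,
      Finset.sum_ite_eq', Finset.sum_ite_eq, Finset.mem_univ, if_true] at h
    exact h
  have hinner : (inner ℂ (v i) (v i') : ℂ) =
      ((1 / (Real.sqrt (lam i) * Real.sqrt (lam i')) : ℝ) : ℂ) *
      ∑ k, ∑ m, K k i' m * (lam m : ℂ) * star (K k i m) := by
    rw [PiLp.inner_apply, Fintype.sum_prod_type, Finset.sum_comm]
    simp only [Finset.mul_sum]
    refine Finset.sum_congr rfl fun k _ => Finset.sum_congr rfl fun m _ => ?_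
    rw [hv, hv]
    have hsq : Real.sqrt (lam m / lam i) * Real.sqrt (lam m / lam i')
        = (1 / (Real.sqrt (lam i) * Real.sqrt (lam i'))) * lam m := by
      rw [Real.sqrt_div (hpos m).le, Real.sqrt_div (hpos m).le, div_mul_div_comm,
        Real.mul_self_sqrt (hpos m).le]
      ring
    have hc : ((Real.sqrt (lam m / lam i) : ℝ) : ℂ) * ((Real.sqrt (lam m / lam i') : ℝ) : ℂ)
        = ((1 / (Real.sqrt (lam i) * Real.sqrt (lam i')) : ℝ) : ℂ) * (lam m : ℂ) := by
      rw [← Complex.ofReal_mul, ← Complex.ofReal_mul, hsq]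
    simp only [RCLike.inner_apply, _root_.map_mul, Complex.conj_ofReal]
    rw [mul_comm]
    calc ((Real.sqrt (lam m / lam i) : ℂ)) * (starRingEnd ℂ) (K k i m) *
          ((Real.sqrt (lam m / lam i') : ℂ) * K k i' m)
        = (((Real.sqrt (lam m / lam i) : ℂ)) * ((Real.sqrt (lam m / lam i') : ℂ))) *
          ((starRingEnd ℂ) (K k i m) * K k i' m) := by ring
      _ = _ := by rw [hc]; simp only [RCLike.star_def]; ring
  rw [hinner, h1]
  rcases eq_or_ne i i' with rfl | hne
  · simp only [if_true]
    rw [← Complex.ofReal_mul]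
    norm_cast
    rw [one_div, inv_mul_eq_div, div_eq_one_iff_eq (mul_pos (Real.sqrt_pos.2 (hpos i)) (Real.sqrt_pos.2 (hpos i))).ne']
    exact (Real.mul_self_sqrt (hpos i).le).symm
  · rw [if_neg (Ne.symm hne), if_neg hne, mul_zero]
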